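/- Let κ be a Mahlo cardinal and let A ⊆ κ be a set of infinite regular cardinals that is stationary in κ. Then κ ∈ spec(A). -/

import Mathlib

universe u

open Cardinal Set

namespace TukeySpec

/-- A subset `S` of a preorder is cofinal if every element has an upper bound in `S`. -/
def IsCofinal {P : Type*} [Preorder P] (S : Set P) : Prop :=
  ∀ p : P, ∃ s ∈ S, p ≤ s

/-- `Q` is a Tukey quotient of `P` (i.e. `P ≥_T Q`): there is a map `P → Q`
sending cofinal sets to cofinal sets. -/
def TukeyQuot (P : Type*) (Q : Type*) [Preorder P] [Preorder Q] : Prop :=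
  ∃ φ : P → Q, ∀ S : Set P, IsCofinal S → IsCofinal (φ '' S)

/-- `P` has calibre `(κ, l, m)`. -/
def Calibre (P : Type u) [Preorder P] (κ l m : Cardinal.{u}) : Prop :=
  ∀ P' : Set P, #P' = κ → ∃ R ⊆ P', #R = l ∧ ∀ B ⊆ R, #B = m → BddAbove B

/-- `P` has calibre `κ` (the simplified form): every `κ`-sized subset has a
`κ`-sized subset which is bounded in `P`. -/
def CalibreSimple (P : Type u) [Preorder P] (κ : Cardinal.{u}) : Prop :=
  ∀ P' : Set P, #P' = κ → ∃ R ⊆ P', #R = κ ∧ BddAbove R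

/-- The Tukey spectrum of a poset: all regular cardinals `κ` with `P ≥_T κ`,
where `κ` carries its usual (ordinal) ordering. -/
def specPoset (P : Type u) [Preorder P] : Set Cardinal.{u} :=
  {κ | κ.IsRegular ∧ TukeyQuot P ↥(Set.Iio κ.ord)}

/-- The product `∏A` of a set of cardinals: all functions on `A` with
`f a < a` (as ordinals). -/
def piSet (A : Set Cardinal.{0}) : Set (↥A → Ordinal.{0}) :=
  {f | ∀ a : ↥A, f a < (a : Cardinal).ord}

/-- A family of members of `∏A` is bounded if it has an upper bound in `(∏A, ≤)`
(pointwise order). -/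
def BddIn (A : Set Cardinal.{0}) (S : Set (↥A → Ordinal.{0})) : Prop :=
  ∃ h ∈ piSet A, ∀ f ∈ S, ∀ a : ↥A, f a ≤ h a

/-- The Tukey spectrum of a set `A` of regular cardinals: all regular `κ` for which
there is a `κ`-sized family `F ⊆ ∏A` all of whose `κ`-sized subfamilies are
unbounded in `(∏A, ≤)`. -/
def spec (A : Set Cardinal.{0}) : Set Cardinal.{0} :=
  {κ | κ.IsRegular ∧ ∃ F ⊆ piSet A, #F = Cardinal.lift.{1} κ ∧
    ∀ F₀ ⊆ F, #F₀ = Cardinal.lift.{1} κ → ¬ BddIn A F₀}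

/-- `cf(∏A/D)`: the least cardinality of a subset of `∏A` which is cofinal
modulo the ultrafilter `D`. -/
noncomputable def cofUlt (A : Set Cardinal.{0}) (D : Ultrafilter ↥A) : Cardinal.{1} :=
  sInf {c : Cardinal.{1} | ∃ S ⊆ piSet A, #S = c ∧
    ∀ f ∈ piSet A, ∃ g ∈ S, {a : ↥A | f a ≤ g a} ∈ D}

/-- `pcf(A)`: the set of all cofinalities `cf(∏A/D)` as `D` ranges over
ultrafilters on `A`. -/
def pcf (A : Set Cardinal.{0}) : Set Cardinal.{0} :=
  {κ | ∃ D : Ultrafilter ↥A, Cardinal.lift.{1} κ = cofUlt A D}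

/-- `ub(F)`: the set of coordinates `a ∈ A` where the family `F` is unbounded. -/
def ub (A : Set Cardinal.{0}) (F : Set (↥A → Ordinal.{0})) : Set ↥A :=
  {a | ∀ β < (a : Cardinal).ord, ∃ f ∈ F, β < f a}

/-- The strong part of the Tukey spectrum: `l ∈ spec*(A)` iff there is an
`l`-sized family `F ⊆ ∏A` such that every `l`-sized subfamily has a set of
unbounded coordinates which is unbounded in `sup A`. -/
def specStarMem (A : Set Cardinal.{0}) (l : Cardinal.{0}) : Prop :=
  l.IsRegular ∧ ∃ F ⊆ piSet A, #F = Cardinal.lift.{1} l ∧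
    ∀ F₀ ⊆ F, #F₀ = Cardinal.lift.{1} l →
      ∀ β < sSup A, ∃ a ∈ ub A F₀, β < (a : Cardinal)

/-- `κ` is a limit point of the set `X` of cardinals. -/
def IsLimitPt (X : Set Cardinal.{0}) (κ : Cardinal.{0}) : Prop :=
  ∀ β < κ, ∃ x ∈ X, β < x ∧ x < κ

/-- `C` is a closed unbounded subset of `κ`. -/
def IsClubIn (C : Set Ordinal.{0}) (κ : Ordinal.{0}) : Prop :=
  C ⊆ Set.Iio κ ∧ (∀ β < κ, ∃ o ∈ C, β < o) ∧
    ∀ β < κ, β ≠ 0 → (∀ γ < β, ∃ o ∈ C, γ < o ∧ o < β) → β ∈ C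

/-- A set `S` of cardinals is stationary in `κ`: it meets every club of `κ`. -/
def StatIn (S : Set Cardinal.{0}) (κ : Cardinal.{0}) : Prop :=
  ∀ C : Set Ordinal.{0}, IsClubIn C κ.ord → ∃ a ∈ S, a.ord ∈ C

/-- `κ` is Mahlo: strongly inaccessible and the regular cardinals below `κ`
are stationary in `κ`. -/
def IsMahlo (κ : Cardinal.{0}) : Prop :=
  κ.IsInaccessible ∧ StatIn {a | a < κ ∧ a.IsRegular} κ

/-- `κ` is weakly compact: strongly inaccessible and `κ → (κ)²₂`. -/
def IsWeaklyCompact (κ : Cardinal.{0}) : Prop :=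
  κ.IsInaccessible ∧
    ∀ c : Ordinal.{0} → Ordinal.{0} → Bool,
      ∃ H ⊆ Set.Iio κ.ord, #H = Cardinal.lift.{1} κ ∧
        ∃ b : Bool, ∀ α ∈ H, ∀ β ∈ H, α < β → c α β = b

/-- `θ` carries a Jónsson algebra: there is `F` from finite subsets of `θ` to `θ`
such that `F` applied to finite subsets of any `θ`-sized `H ⊆ θ` covers `θ`. -/
def CarriesJonsson (θ : Cardinal.{0}) : Prop :=
  ∃ F : Finset Ordinal.{0} → Ordinal.{0},
    (∀ s : Finset Ordinal.{0}, (↑s : Set Ordinal) ⊆ Set.Iio θ.ord → F s < θ.ord) ∧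
    ∀ H ⊆ Set.Iio θ.ord, #H = Cardinal.lift.{1} θ →
      ∀ γ < θ.ord, ∃ s : Finset Ordinal.{0}, (↑s : Set Ordinal) ⊆ H ∧ F s = γ

/-- `cf(∏A/J_bd)`: the least cardinality of a subset of `∏A` cofinal modulo
the ideal of bounded subsets of `A`. -/
noncomputable def cofJbd (A : Set Cardinal.{0}) : Cardinal.{1} :=
  sInf {c : Cardinal.{1} | ∃ S ⊆ piSet A, #S = c ∧
    ∀ f ∈ piSet A, ∃ g ∈ S, ∃ b < sSup A, ∀ a : ↥A, b < (a : Cardinal) → f a ≤ g a}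

/-- `μ` is a limit cardinal. -/
def IsLimitCard (μ : Cardinal.{0}) : Prop :=
  ℵ₀ ≤ μ ∧ ∀ ν < μ, Order.succ ν < μ

/-- If `κ` is Mahlo and `A ⊆ κ` is a stationary set of infinite
regular cardinals, then `κ ∈ spec(A)`. -/
theorem statement11 (κ : Cardinal.{0}) (hM : IsMahlo κ)
    (A : Set Cardinal.{0}) (hA : ∀ a ∈ A, a.IsRegular) (hsub : ∀ a ∈ A, a < κ)
    (hstat : StatIn A κ) :
    κ ∈ spec A := by
  classical
  obtain ⟨⟨hκℵ, hκreg, _⟩, _⟩ := hM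
  have hℵ : ℵ₀ ≤ κ := hκℵ.le
  have hord : Order.IsSuccLimit κ.ord := Cardinal.isSuccLimit_ord hℵ
  -- the family
  set f : Ordinal.{0} → (↥A → Ordinal.{0}) :=
    fun α a => if α < (a : Cardinal).ord then α else 0 with hfdef
  have hapos : ∀ a : ↥A, (0 : Ordinal) < (a : Cardinal).ord := by
    intro a
    rw [pos_iff_ne_zero]
    intro h0
    have h1 : (a : Cardinal) = 0 := Cardinal.ord_eq_zero.1 h0
    have h2 := (hA a a.2).aleph0_le
    rw [h1] at h2
    exact Cardinal.aleph0_ne_zero (le_antisymm h2 zero_le)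
  have hfpi : ∀ α, f α ∈ piSet A := by
    intro α a
    by_cases h : α < (a : Cardinal).ord
    · simpa [hfdef, h] using h
    · simpa [hfdef, h] using hapos a
  -- A is unbounded below κ.ord
  have hAub : ∀ γ < κ.ord, ∃ a ∈ A, γ < (a : Cardinal).ord := by
    intro γ hγ
    have hclub : IsClubIn {o | γ < o ∧ o < κ.ord} κ.ord := by
      refine ⟨fun o ho => ho.2, ?_, ?_⟩
      · intro β hβ
        refine ⟨Order.succ (max γ β), ⟨?_, hord.succ_lt (max_lt hγ hβ)⟩, ?_⟩
        · exact (le_max_left γ β).trans_lt (Order.lt_succ _)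
        · exact (le_max_right γ β).trans_lt (Order.lt_succ _)
      · intro β hβ hβ0 hcl
        obtain ⟨o, ho, _, hoβ⟩ := hcl 0 (pos_iff_ne_zero.2 hβ0)
        exact ⟨ho.1.trans hoβ, hβ⟩
    obtain ⟨a, haA, hao⟩ := hstat _ hclub
    exact ⟨a, haA, hao.1⟩
  -- injectivity
  have haux : ∀ α α', α < α' → α' < κ.ord → f α ≠ f α' := by
    intro α α' hlt hα' heq
    obtain ⟨a, haA, ha⟩ := hAub α' hα'
    have h1 : f α ⟨a, haA⟩ = α := if_pos (hlt.trans ha)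
    have h2 : f α' ⟨a, haA⟩ = α' := if_pos ha
    rw [heq, h2] at h1
    exact hlt.ne' h1
  have hinj : Set.InjOn f (Set.Iio κ.ord) := by
    intro α hα α' hα' heq
    rcases lt_trichotomy α α' with h | h | h
    · exact absurd heq (haux α α' h hα')
    · exact h
    · exact absurd heq.symm (haux α' α h hα)
  refine ⟨(⟨hℵ, hκreg⟩ : κ.IsRegular), f '' Set.Iio κ.ord, ?_, ?_, ?_⟩
  · rintro g ⟨α, _, rfl⟩
    exact hfpi α
  · rw [Cardinal.mk_image_eq_of_injOn f _ hinj, Ordinal.mk_Iio_ordinal, Cardinal.card_ord]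
  · rintro F₀ hF₀sub hF₀card ⟨h, hhpi, hhub⟩
    set S : Set Ordinal.{0} := {α | α < κ.ord ∧ f α ∈ F₀} with hSdef
    have hSsub : S ⊆ Set.Iio κ.ord := fun α hα => hα.1
    have hF₀eq : F₀ = f '' S := by
      ext g
      constructor
      · intro hg
        obtain ⟨α, hα, rfl⟩ := hF₀sub hg
        exact ⟨α, ⟨hα, hg⟩, rfl⟩
      · rintro ⟨α, hα, rfl⟩
        exact hα.2
    have hScard : #S = Cardinal.lift.{1} κ := by
      rw [← hF₀card, hF₀eq, Cardinal.mk_image_eq_of_injOn f _ (hinj.mono hSsub)]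
    -- S is unbounded below κ.ord
    have hSub : ∀ β < κ.ord, ∃ α, α ∈ S ∧ β < α := by
      intro β hβ
      by_contra hcon
      push_neg at hcon
      have hsub' : S ⊆ Set.Iio (Order.succ β) :=
        fun α hα => Order.lt_succ_of_le (hcon α hα)
      have h1 : #S ≤ #(Set.Iio (Order.succ β) : Set Ordinal) :=
        Cardinal.mk_le_mk_of_subset hsub'
      rw [hScard, Ordinal.mk_Iio_ordinal, Cardinal.lift_le] at h1
      exact absurd h1 (not_le.2 (Cardinal.lt_ord.1 (hord.succ_lt hβ)))
    have hnx : ∀ β : Ordinal.{0}, ∃ α, β < κ.ord → α ∈ S ∧ β < α := by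
      intro β
      by_cases hβ : β < κ.ord
      · obtain ⟨α, h1, h2⟩ := hSub β hβ
        exact ⟨α, fun _ => ⟨h1, h2⟩⟩
      · exact ⟨0, fun hc => absurd hc hβ⟩
    choose nx hnx using hnx
    -- the club of limit points of S
    set C : Set Ordinal.{0} :=
      {β | β < κ.ord ∧ ∀ γ < β, ∃ α ∈ S, γ < α ∧ α < β} with hCdef
    have hclub : IsClubIn C κ.ord := by
      refine ⟨fun o ho => ho.1, ?_, ?_⟩
      · intro β hβ
        set g : ℕ → Ordinal.{0} := fun n => Nat.rec (nx β) (fun _ ih => nx ih) n with hgdef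
        have hg0 : g 0 ∈ S ∧ β < g 0 := hnx β hβ
        have hgS : ∀ n, g n ∈ S := by
          intro n
          induction n with
          | zero => exact hg0.1
          | succ n ih => exact (hnx (g n) ih.1).1
        have hglt : ∀ n, g n < g (n + 1) := fun n => (hnx (g n) (hgS n).1).2
        have hβ'κ : (⨆ n, g n) < κ.ord := by
          apply Ordinal.iSup_lt_ord _ fun n => (hgS n).1
          rw [(⟨hℵ, hκreg⟩ : κ.IsRegular).cof_eq, Cardinal.mk_nat]
          exact hκℵ
        refine ⟨⨆ n, g n, ⟨hβ'κ, ?_⟩, hg0.2.trans_le (Ordinal.le_iSup g 0)⟩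
        intro γ hγ
        rw [Ordinal.lt_iSup_iff] at hγ
        obtain ⟨n, hn⟩ := hγ
        exact ⟨g n, hgS n, hn, (hglt n).trans_le (Ordinal.le_iSup g (n + 1))⟩
      · intro β hβ hβ0 hcl
        refine ⟨hβ, fun γ hγ => ?_⟩
        obtain ⟨o, hoC, hγo, hoβ⟩ := hcl γ hγ
        obtain ⟨α, hαS, hγα, hαo⟩ := hoC.2 γ hγo
        exact ⟨α, hαS, hγα, hαo.trans hoβ⟩
    obtain ⟨a, haA, haC⟩ := hstat C hclub
    obtain ⟨α, hαS, hhα, hαa⟩ := haC.2 (h ⟨a, haA⟩) (hhpi ⟨a, haA⟩)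
    have hle : f α ⟨a, haA⟩ ≤ h ⟨a, haA⟩ := hhub (f α) hαS.2 ⟨a, haA⟩
    have hfα : f α ⟨a, haA⟩ = α := if_pos hαa
    rw [hfα] at hle
    exact absurd hle (not_le.2 hhα)

end TukeySpec
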